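/- arXiv:1303.7416 — 4 statements merged into one kernel-verified Lean document; each statement's English description precedes it below -/
import Mathlib

section
/- Abstract Friedrichs–Poincaré inequality: if γ : V → H is a nonzero continuous, linear, compact operator between Hilbert spaces and λ₁ is the smallest eigenvalue of the problem (u,v)_V = λ (γu, γv)_H, then ‖γv‖_H ≤ λ₁^{-1/2} ‖v‖_V for all v ∈ V, and the constant C_γ = λ₁^{-1/2} is optimal, i.e., equality holds for the eigenvector u₁ corresponding to λ₁. -/
open RealInnerProductSpace

/-- Abstract inequality of Friedrichs–Poincaré type: if `λ₁` is the smallest eigenvalue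
of `(u,v)_V = λ (γu,γv)_H` then `‖γ v‖_H ≤ λ₁^{-1/2} ‖v‖_V` for all `v`, and equality
holds for the eigenvector `u₁` corresponding to `λ₁`, so the constant is optimal. -/
theorem abstract_friedrichs_poincare_inequality
    {V H : Type*} [NormedAddCommGroup V] [InnerProductSpace ℝ V] [CompleteSpace V]
    [NormedAddCommGroup H] [InnerProductSpace ℝ H] [CompleteSpace H]
    (γ : V →L[ℝ] H) (hγ : IsCompactOperator γ) (hγ0 : γ ≠ 0)
    (lam₁ : ℝ) (u₁ : V) (hu₁ : u₁ ≠ 0)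
    (heig : ∀ v : V, ⟪u₁, v⟫ = lam₁ * ⟪γ u₁, γ v⟫)
    (hmin : ∀ (lam : ℝ) (u : V), u ≠ 0 → (∀ v : V, ⟪u, v⟫ = lam * ⟪γ u, γ v⟫) →
      lam₁ ≤ lam) :
    (∀ v : V, ‖γ v‖ ≤ (Real.sqrt lam₁)⁻¹ * ‖v‖) ∧
      ‖γ u₁‖ = (Real.sqrt lam₁)⁻¹ * ‖u₁‖ := by
  classical
  -- basic facts about `lam₁` and `u₁`
  have hkey : ‖u₁‖ ^ 2 = lam₁ * ‖γ u₁‖ ^ 2 := by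
    have := heig u₁
    rwa [real_inner_self_eq_norm_sq, real_inner_self_eq_norm_sq] at this
  have hu₁n : (0 : ℝ) < ‖u₁‖ ^ 2 := by
    have : ‖u₁‖ ≠ 0 := norm_ne_zero_iff.mpr hu₁
    positivity
  have hγu₁ : γ u₁ ≠ 0 := by
    intro h
    rw [h] at hkey
    simp at hkey
    exact hu₁ hkey
  have hlam₁ : 0 < lam₁ := by
    have h2 : (0 : ℝ) < ‖γ u₁‖ ^ 2 := by
      have : ‖γ u₁‖ ≠ 0 := norm_ne_zero_iff.mpr hγu₁
      positivity
    nlinarith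
  -- equality part
  have heq : ‖γ u₁‖ = (Real.sqrt lam₁)⁻¹ * ‖u₁‖ := by
    have h1 : ‖γ u₁‖ ^ 2 = lam₁⁻¹ * ‖u₁‖ ^ 2 := by
      field_simp at hkey ⊢
      nlinarith
    have := congrArg Real.sqrt h1
    rwa [Real.sqrt_sq (norm_nonneg _), Real.sqrt_mul (by positivity),
      Real.sqrt_sq (norm_nonneg _), Real.sqrt_inv] at this
  refine ⟨?_, heq⟩
  -- the operator `T = γ* ∘ γ`
  set T : V →L[ℝ] V := (ContinuousLinearMap.adjoint γ).comp γ with hTdef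
  have hTin : ∀ v w : V, ⟪T v, w⟫ = ⟪γ v, γ w⟫ := by
    intro v w
    simp [hTdef, ContinuousLinearMap.adjoint_inner_left]
  -- the sup of the Rayleigh quotient
  set S : Set ℝ := (fun v : V => ‖γ v‖ ^ 2) '' Metric.sphere (0 : V) 1 with hSdef
  obtain ⟨v₀, hv₀⟩ : ∃ v : V, γ v ≠ 0 := by
    by_contra h
    push_neg at h
    exact hγ0 (by ext v; simpa using h v)
  have hv₀0 : v₀ ≠ 0 := by
    intro h; apply hv₀; simp [h]
  have hv₀s : (‖v₀‖⁻¹ • v₀) ∈ Metric.sphere (0 : V) 1 := by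
    simp [norm_smul, norm_ne_zero_iff.mpr hv₀0,
      inv_mul_cancel₀ (norm_ne_zero_iff.mpr hv₀0)]
  have hSne : S.Nonempty := ⟨_, Set.mem_image_of_mem _ hv₀s⟩
  have hSbdd : BddAbove S := by
    refine ⟨‖γ‖ ^ 2, ?_⟩
    rintro x ⟨v, hv, rfl⟩
    have hv1 : ‖v‖ = 1 := by simpa using hv
    have := γ.le_opNorm v
    rw [hv1, mul_one] at this
    show ‖γ v‖ ^ 2 ≤ ‖γ‖ ^ 2
    nlinarith [norm_nonneg (γ v), norm_nonneg γ]
  set M : ℝ := sSup S with hMdef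
  have hMpos : 0 < M := by
    refine lt_of_lt_of_le ?_ (le_csSup hSbdd (Set.mem_image_of_mem _ hv₀s))
    have : γ (‖v₀‖⁻¹ • v₀) = ‖v₀‖⁻¹ • γ v₀ := by simp
    rw [this]
    have : ‖(‖v₀‖⁻¹ • γ v₀)‖ ≠ 0 := by
      simp [norm_smul, norm_ne_zero_iff.mpr hv₀0, hv₀]
    positivity
  -- the fundamental bound `‖γ v‖² ≤ M ‖v‖²`
  have hbound : ∀ v : V, ‖γ v‖ ^ 2 ≤ M * ‖v‖ ^ 2 := by
    intro v
    rcases eq_or_ne v 0 with rfl | hv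
    · simp
    · have hvn : ‖v‖ ≠ 0 := norm_ne_zero_iff.mpr hv
      have hs : (‖v‖⁻¹ • v) ∈ Metric.sphere (0 : V) 1 := by
        simp [norm_smul, inv_mul_cancel₀ hvn]
      have hle := le_csSup hSbdd (Set.mem_image_of_mem (fun v : V => ‖γ v‖ ^ 2) hs)
      simp only [map_smul, norm_smul, norm_inv, norm_norm] at hle
      have : (‖v‖⁻¹ * ‖γ v‖) ^ 2 ≤ M := hle
      have h2 : ‖γ v‖ ^ 2 / ‖v‖ ^ 2 ≤ M := by
        rw [div_le_iff₀ (by positivity)] at *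
        calc ‖γ v‖ ^ 2 = (‖v‖⁻¹ * ‖γ v‖) ^ 2 * ‖v‖ ^ 2 := by field_simp
        _ ≤ M * ‖v‖ ^ 2 := by nlinarith [sq_nonneg ‖v‖]
      rw [div_le_iff₀ (by positivity)] at h2
      linarith
  have hboundn : ∀ v : V, ‖γ v‖ ≤ Real.sqrt M * ‖v‖ := by
    intro v
    have := Real.sqrt_le_sqrt (hbound v)
    rwa [Real.sqrt_sq (norm_nonneg _), Real.sqrt_mul hMpos.le,
      Real.sqrt_sq (norm_nonneg _)] at this
  -- `T` has operator-type bound `‖T v‖ ≤ M ‖v‖`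
  have hTbound : ∀ v : V, ‖T v‖ ≤ M * ‖v‖ := by
    intro v
    rcases eq_or_ne (T v) 0 with h | h
    · rw [h]; simp; positivity
    · have h1 : ‖T v‖ ^ 2 = ⟪γ v, γ (T v)⟫ := by
        rw [← hTin v (T v), real_inner_self_eq_norm_sq]
      have h2 : ⟪γ v, γ (T v)⟫ ≤ ‖γ v‖ * ‖γ (T v)‖ := real_inner_le_norm _ _
      have h3 : ‖γ v‖ * ‖γ (T v)‖ ≤ (Real.sqrt M * ‖v‖) * (Real.sqrt M * ‖T v‖) := by
        have := hboundn v
        have := hboundn (T v)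
        have := norm_nonneg (γ v)
        have := norm_nonneg (γ (T v))
        nlinarith [norm_nonneg (γ v), norm_nonneg (T v),
          Real.sqrt_nonneg M, norm_nonneg v, hboundn v, hboundn (T v)]
      have hsq : Real.sqrt M * Real.sqrt M = M := Real.mul_self_sqrt hMpos.le
      have h4 : ‖T v‖ ^ 2 ≤ M * ‖v‖ * ‖T v‖ := by nlinarith
      have hTvpos : 0 < ‖T v‖ := norm_pos_iff.mpr h
      nlinarith
  -- maximizing sequence
  have hseq : ∀ n : ℕ, ∃ v : V, v ∈ Metric.sphere (0 : V) 1 ∧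
      M - 1 / (n + 1) < ‖γ v‖ ^ 2 := by
    intro n
    have h : M - 1 / (n + 1) < M := by
      have : (0 : ℝ) < 1 / (n + 1) := by positivity
      linarith
    obtain ⟨x, hx, hx2⟩ := exists_lt_of_lt_csSup hSne h
    obtain ⟨v, hv, rfl⟩ := hx
    exact ⟨v, hv, hx2⟩
  choose v hvs hvlt using hseq
  have hv1 : ∀ n, ‖v n‖ = 1 := fun n => by simpa using hvs n
  have hvle : ∀ n, ‖γ (v n)‖ ^ 2 ≤ M := fun n => by
    have := hbound (v n); rw [hv1 n] at this; simpa using this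
  have htend : Filter.Tendsto (fun n => ‖γ (v n)‖ ^ 2) Filter.atTop (nhds M) := by
    apply tendsto_of_tendsto_of_tendsto_of_le_of_le
      (g := fun n : ℕ => M - 1 / (n + 1)) (h := fun _ : ℕ => M)
    · have : Filter.Tendsto (fun n : ℕ => 1 / ((n : ℝ) + 1)) Filter.atTop (nhds 0) :=
        tendsto_one_div_add_atTop_nhds_zero_nat
      simpa using tendsto_const_nhds.sub this
    · exact tendsto_const_nhds
    · exact fun n => (hvlt n).le
    · exact hvle
  -- `T (v n) - M • v n → 0`
  have hanorm : ∀ n, ‖T (v n) - M • v n‖ ^ 2 ≤ 2 * M * (M - ‖γ (v n)‖ ^ 2) := by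
    intro n
    have hexp : ‖T (v n) - M • v n‖ ^ 2
        = ‖T (v n)‖ ^ 2 - 2 * M * ⟪T (v n), v n⟫ + M ^ 2 * ‖v n‖ ^ 2 := by
      rw [norm_sub_sq_real, real_inner_smul_right, norm_smul, Real.norm_eq_abs,
        mul_pow, sq_abs]
      ring
    have hip : ⟪T (v n), v n⟫ = ‖γ (v n)‖ ^ 2 := by
      rw [hTin, real_inner_self_eq_norm_sq]
    have hTn : ‖T (v n)‖ ^ 2 ≤ M ^ 2 := by
      have := hTbound (v n); rw [hv1 n, mul_one] at this
      nlinarith [norm_nonneg (T (v n))]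
    rw [hexp, hip, hv1 n]
    ring_nf
    nlinarith
  have hatend : Filter.Tendsto (fun n => T (v n) - M • v n) Filter.atTop (nhds 0) := by
    rw [tendsto_zero_iff_norm_tendsto_zero]
    apply squeeze_zero (fun n => norm_nonneg _)
      (g := fun n => Real.sqrt (2 * M * (M - ‖γ (v n)‖ ^ 2)))
    · intro n
      have h1 := hanorm n
      have := Real.sqrt_le_sqrt h1
      rwa [Real.sqrt_sq (norm_nonneg _)] at this
    · have hc : Filter.Tendsto (fun n => 2 * M * (M - ‖γ (v n)‖ ^ 2))
          Filter.atTop (nhds 0) := by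
        have := (tendsto_const_nhds (x := M) (f := Filter.atTop (α := ℕ))).sub htend
        have h2 := this.const_mul (2 * M)
        simpa using h2
      have := (Real.continuous_sqrt.tendsto 0).comp hc
      simpa [Function.comp_def] using this
  -- compactness: extract a convergent subsequence of `T (v n)`
  have hTcomp : IsCompactOperator (T : V →L[ℝ] V) := by
    have : IsCompactOperator (⇑(ContinuousLinearMap.adjoint γ) ∘ ⇑γ) :=
      hγ.continuous_comp (ContinuousLinearMap.adjoint γ).continuous
    simpa [hTdef, ContinuousLinearMap.coe_comp'] using this
  have hK : IsCompact (closure ((T : V →L[ℝ] V) '' Metric.closedBall 0 1)) := by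
    exact hTcomp.isCompact_closure_image_closedBall (𝕜₁ := ℝ) 1
  have hmem : ∀ n, T (v n) ∈ closure ((T : V →L[ℝ] V) '' Metric.closedBall 0 1) := by
    intro n
    apply subset_closure
    exact Set.mem_image_of_mem _ (by simp [hv1 n])
  obtain ⟨z, _, φ, hφ, hzt⟩ := hK.tendsto_subseq hmem
  -- the limit eigenvector
  have hMvtend : Filter.Tendsto (fun n => M • v (φ n)) Filter.atTop (nhds z) := by
    have h1 : Filter.Tendsto (fun n => T (v (φ n)) - M • v (φ n)) Filter.atTop (nhds 0) :=
      hatend.comp hφ.tendsto_atTop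
    have := hzt.sub h1
    simpa using this
  set u : V := M⁻¹ • z with hudef
  have hvtend : Filter.Tendsto (fun n => v (φ n)) Filter.atTop (nhds u) := by
    have := hMvtend.const_smul M⁻¹
    simp only [smul_smul, inv_mul_cancel₀ hMpos.ne', one_smul] at this
    exact this
  have hun : ‖u‖ = 1 := by
    have h1 : Filter.Tendsto (fun n => ‖v (φ n)‖) Filter.atTop (nhds ‖u‖) :=
      hvtend.norm
    have h2 : Filter.Tendsto (fun n => ‖v (φ n)‖) Filter.atTop (nhds 1) := by
      simpa [hv1] using tendsto_const_nhds (x := (1 : ℝ)) (f := Filter.atTop (α := ℕ))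
    exact tendsto_nhds_unique h1 h2
  have hu0 : u ≠ 0 := by
    intro h; rw [h] at hun; simp at hun
  have hTu : T u = M • u := by
    have h1 : Filter.Tendsto (fun n => T (v (φ n))) Filter.atTop (nhds (T u)) :=
      (T.continuous.tendsto u).comp hvtend
    have h2 : T u = z := tendsto_nhds_unique h1 hzt
    rw [h2, hudef, smul_smul, mul_inv_cancel₀ hMpos.ne', one_smul]
  -- `u` is an eigenvector with eigenvalue `M⁻¹`
  have heigu : ∀ w : V, ⟪u, w⟫ = M⁻¹ * ⟪γ u, γ w⟫ := by
    intro w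
    have h1 : ⟪T u, w⟫ = ⟪γ u, γ w⟫ := hTin u w
    rw [hTu, real_inner_smul_left] at h1
    rw [← h1]
    field_simp
  have hle : lam₁ ≤ M⁻¹ := hmin M⁻¹ u hu0 heigu
  have hMle : M ≤ lam₁⁻¹ := by
    rw [← inv_inv M]
    exact inv_anti₀ hlam₁ hle
  -- conclude
  intro w
  have h1 : ‖γ w‖ ^ 2 ≤ lam₁⁻¹ * ‖w‖ ^ 2 :=
    (hbound w).trans (mul_le_mul_of_nonneg_right hMle (sq_nonneg _))
  have := Real.sqrt_le_sqrt h1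
  rwa [Real.sqrt_sq (norm_nonneg _), Real.sqrt_mul (by positivity),
    Real.sqrt_sq (norm_nonneg _), Real.sqrt_inv] at this
end

section
/- A priori–a posteriori inequality: let u_* ∈ V, λ_* ∈ ℝ be arbitrary, and let w ∈ V satisfy (w,v)_V = (u_*,v)_V − λ_* (γu_*, γv)_H for all v ∈ V. If γu_* ≠ 0, then min_i |(λ_i − λ_*)/λ_i| ≤ ‖γw‖_H / ‖γu_*‖_H, where λ_i range over the eigenvalues of the problem (u,v)_V = λ (γu, γv)_H. -/
open RealInnerProductSpace

/-- A priori–a posteriori inequality: if `w` is the residual of an arbitrary pair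
`(u_*, λ_*)`, i.e. `(w,v)_V = (u_*,v)_V − λ_* (γu_*, γv)_H` for all `v`, and
`γ u_* ≠ 0`, then `inf_i |(λᵢ − λ_*)/λᵢ| ≤ ‖γw‖_H / ‖γu_*‖_H`, where the `λᵢ` are the
eigenvalues of `(u,v)_V = λ (γu, γv)_H` with eigenvectors `uᵢ` normalized by
`(γuᵢ, γuⱼ)_H = δᵢⱼ`, spanning `V` together with `ker (Sγ)`. -/
theorem apriori_aposteriori_inequality
    {V H : Type*} [NormedAddCommGroup V] [InnerProductSpace ℝ V] [CompleteSpace V]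
    [NormedAddCommGroup H] [InnerProductSpace ℝ H] [CompleteSpace H]
    (γ : V →L[ℝ] H) (hγ : IsCompactOperator γ)
    (S : H →L[ℝ] V)
    (hS : ∀ (f : H) (v : V), ⟪S f, v⟫ = ⟪f, γ v⟫)
    (lam : ℕ → ℝ) (ui : ℕ → V)
    (hui : ∀ i, ui i ≠ 0)
    (heig : ∀ i, ∀ v : V, ⟪ui i, v⟫ = lam i * ⟪γ (ui i), γ v⟫)
    (hortho : ∀ i j, ⟪γ (ui i), γ (ui j)⟫ = if i = j then (1 : ℝ) else 0)
    (hdecomp : ∀ u : V, ∃ m ∈ (Submodule.span ℝ (Set.range ui)).topologicalClosure,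
      ∃ k : V, S (γ k) = 0 ∧ u = m + k)
    (ustar : V) (lamstar : ℝ) (hustar : γ ustar ≠ 0)
    (w : V)
    (hw : ∀ v : V, ⟪w, v⟫ = ⟪ustar, v⟫ - lamstar * ⟪γ ustar, γ v⟫) :
    (⨅ i : ℕ, |(lam i - lamstar) / lam i|) ≤ ‖γ w‖ / ‖γ ustar‖ := by
  classical
  -- eigenvalues are positive
  have hlampos : ∀ i, 0 < lam i := by
    intro i
    have h := heig i (ui i)
    rw [hortho i i, if_pos rfl, mul_one] at h
    have h2 : (0:ℝ) < ⟪ui i, ui i⟫ := by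
      have hn : ‖ui i‖ ≠ 0 := norm_ne_zero_iff.mpr (hui i)
      rw [real_inner_self_eq_norm_sq]
      positivity
    linarith
  set e : ℕ → H := fun i => γ (ui i) with he
  have hone : Orthonormal ℝ e := by
    rw [orthonormal_iff_ite]
    intro i j
    simpa using hortho i j
  set K : Submodule ℝ H := (Submodule.span ℝ (Set.range e)).topologicalClosure with hK
  haveI : CompleteSpace K := (Submodule.isClosed_topologicalClosure _).completeSpace_coe
  -- γ maps everything into K
  have hmemK : ∀ u : V, γ u ∈ K := by
    intro u
    obtain ⟨m, hm, k, hk0, rfl⟩ := hdecomp u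
    have hγk : γ k = 0 := by
      have h1 : ⟪γ k, γ k⟫ = (0:ℝ) := by
        rw [← hS (γ k) k, hk0, inner_zero_left]
      exact inner_self_eq_zero.mp h1
    have hmap : Set.MapsTo γ (Submodule.span ℝ (Set.range ui) : Set V)
        (Submodule.span ℝ (Set.range e) : Set H) := by
      intro v hv
      have h1 : γ v ∈ Submodule.map (γ : V →ₗ[ℝ] H) (Submodule.span ℝ (Set.range ui)) :=
        ⟨v, hv, rfl⟩
      rwa [Submodule.map_span, ← Set.range_comp] at h1
    have hm' : (m : V) ∈ closure (Submodule.span ℝ (Set.range ui) : Set V) := hm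
    have h2 : γ m ∈ closure (Submodule.span ℝ (Set.range e) : Set H) :=
      map_mem_closure γ.continuous hm' hmap
    have h3 : γ m ∈ K := h2
    simpa [map_add, hγk] using h3
  -- lift e to K
  have heK : ∀ i, e i ∈ K :=
    fun i => Submodule.le_topologicalClosure _ (Submodule.subset_span ⟨i, rfl⟩)
  set e' : ℕ → K := fun i => ⟨e i, heK i⟩ with he'
  have hone' : Orthonormal ℝ e' := by
    rw [orthonormal_iff_ite]
    intro i j
    show (⟪(e' i : H), (e' j : H)⟫ : ℝ) = _
    simpa using hortho i j
  have himg : (Subtype.val '' ((Submodule.span ℝ (Set.range e') : Submodule ℝ K) : Set K))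
      = ((Submodule.span ℝ (Set.range e) : Submodule ℝ H) : Set H) := by
    have h1 := Submodule.map_span K.subtype (Set.range e')
    have h2 : K.subtype '' Set.range e' = Set.range e := by
      rw [← Set.range_comp]
      rfl
    rw [h2] at h1
    calc Subtype.val '' ((Submodule.span ℝ (Set.range e') : Submodule ℝ K) : Set K)
        = ((Submodule.map K.subtype (Submodule.span ℝ (Set.range e'))) : Set H) := rfl
      _ = _ := by rw [h1]
  have hsp : ⊤ ≤ (Submodule.span ℝ (Set.range e')).topologicalClosure := by
    intro x _
    have hx : (x : H) ∈ closure (Subtype.val ''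
        ((Submodule.span ℝ (Set.range e') : Submodule ℝ K) : Set K)) := by
      rw [himg]
      exact x.2
    exact closure_subtype.mpr hx
  have hbcoe : ∀ i, (HilbertBasis.mk hone' hsp) i = e' i :=
    fun i => congrFun (HilbertBasis.coe_mk hone' hsp) i
  -- key identity
  have hkey : ∀ i, ⟪e i, γ w⟫ = ((lam i - lamstar) / lam i) * ⟪e i, γ ustar⟫ := by
    intro i
    have h1 : ⟪w, ui i⟫ = ⟪ustar, ui i⟫ - lamstar * ⟪γ ustar, γ (ui i)⟫ := hw (ui i)
    have h2 : ⟪ui i, w⟫ = lam i * ⟪γ (ui i), γ w⟫ := heig i w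
    have h3 : ⟪ui i, ustar⟫ = lam i * ⟪γ (ui i), γ ustar⟫ := heig i ustar
    have c1 : ⟪w, ui i⟫ = lam i * ⟪γ (ui i), γ w⟫ := (real_inner_comm (ui i) w).trans h2
    have c2 : ⟪ustar, ui i⟫ = lam i * ⟪γ (ui i), γ ustar⟫ := (real_inner_comm (ui i) ustar).trans h3
    have c3 : ⟪γ ustar, γ (ui i)⟫ = (⟪γ (ui i), γ ustar⟫ : ℝ) := real_inner_comm _ _
    rw [c1, c2, c3] at h1
    have hl : lam i ≠ 0 := ne_of_gt (hlampos i)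
    have hA : lam i * ⟪γ (ui i), γ w⟫ = (lam i - lamstar) * ⟪γ (ui i), γ ustar⟫ := by
      linear_combination h1
    show (⟪γ (ui i), γ w⟫ : ℝ) = ((lam i - lamstar) / lam i) * ⟪γ (ui i), γ ustar⟫
    field_simp
    linear_combination hA
  -- Parseval
  set xK : K := ⟨γ ustar, hmemK ustar⟩ with hxK
  set wK : K := ⟨γ w, hmemK w⟩ with hwK
  have hinner : ∀ (z : K) i,
      (⟪z, (HilbertBasis.mk hone' hsp) i⟫ : ℝ) * ⟪(HilbertBasis.mk hone' hsp) i, z⟫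
        = (⟪e i, (z : H)⟫ : ℝ)^2 := by
    intro z i
    have h : (⟪(HilbertBasis.mk hone' hsp) i, z⟫ : ℝ) = ⟪e i, (z : H)⟫ := by
      rw [hbcoe i, Submodule.coe_inner]
    rw [real_inner_comm ((HilbertBasis.mk hone' hsp) i) z, h, sq]
  have hxsum : HasSum (fun i => (⟪e i, γ ustar⟫ : ℝ)^2) (‖γ ustar‖^2) := by
    have h := (HilbertBasis.mk hone' hsp).hasSum_inner_mul_inner xK xK
    simp only [hinner xK] at h
    have hn : (⟪xK, xK⟫ : ℝ) = ‖γ ustar‖^2 := by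
      rw [real_inner_self_eq_norm_sq]
      rfl
    rwa [hn] at h
  have hwsum : HasSum (fun i => (⟪e i, γ w⟫ : ℝ)^2) (‖γ w‖^2) := by
    have h := (HilbertBasis.mk hone' hsp).hasSum_inner_mul_inner wK wK
    simp only [hinner wK] at h
    have hn : (⟪wK, wK⟫ : ℝ) = ‖γ w‖^2 := by
      rw [real_inner_self_eq_norm_sq]
      rfl
    rwa [hn] at h
  -- infimum facts
  set δ : ℝ := ⨅ i : ℕ, |(lam i - lamstar) / lam i| with hδ
  have hbdd : BddBelow (Set.range fun i => |(lam i - lamstar) / lam i|) := by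
    refine ⟨0, ?_⟩
    rintro x ⟨i, rfl⟩
    exact abs_nonneg _
  have hδ0 : 0 ≤ δ := le_ciInf fun i => abs_nonneg _
  have hδle : ∀ i, δ ≤ |(lam i - lamstar) / lam i| := fun i => ciInf_le hbdd i
  -- termwise inequality and summation
  have hterm : ∀ i, δ^2 * (⟪e i, γ ustar⟫ : ℝ)^2 ≤ (⟪e i, γ w⟫ : ℝ)^2 := by
    intro i
    rw [hkey i, mul_pow]
    have h1 : δ^2 ≤ ((lam i - lamstar) / lam i)^2 := by
      rw [← sq_abs ((lam i - lamstar) / lam i)]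
      exact pow_le_pow_left₀ hδ0 (hδle i) 2
    exact mul_le_mul_of_nonneg_right h1 (sq_nonneg _)
  have hsum : δ^2 * ‖γ ustar‖^2 ≤ ‖γ w‖^2 :=
    hasSum_le hterm (hxsum.mul_left _) hwsum
  -- conclude
  rw [le_div_iff₀ (norm_pos_iff.mpr hustar)]
  nlinarith [norm_nonneg (γ w), mul_nonneg hδ0 (norm_nonneg (γ ustar)), hsum]
end

section
/- Abstract complementarity lower bound: with w the residual of (u_*, λ_*), suppose λ₁ is relatively closest to λ_*, i.e., |(λ₁−λ_*)/λ₁| ≤ |(λ_i−λ_*)/λ_i| for all i; suppose A ≥ 0, B ≥ 0 satisfy B < λ_* ‖γu_*‖_H and ‖w‖_V ≤ A + C_γ B, where C_γ = λ₁^{-1/2}. Then X₂² ≤ λ₁ and C_γ ≤ 1/X₂, where X₂ = (−α + √(α² + 4(λ_* − β)))/2 with α = A/‖γu_*‖_H and β = B/‖γu_*‖_H. -/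
open RealInnerProductSpace

set_option maxHeartbeats 1000000 in
/-- Abstract complementarity lower bound on the smallest eigenvalue `λ₁ = lam 0`:
if `λ₁` is relatively closest to `λ_*`, `B < λ_* ‖γ u_*‖`, and
`‖w‖_V ≤ A + C_γ B` with `C_γ = λ₁^{-1/2}` the optimal constant, then
`X₂² ≤ λ₁` and `C_γ ≤ 1/X₂`, where
`X₂ = (−α + √(α² + 4(λ_* − β)))/2`, `α = A/‖γu_*‖`, `β = B/‖γu_*‖`. -/
theorem abstract_complementarity_estimate
    {V H : Type*} [NormedAddCommGroup V] [InnerProductSpace ℝ V] [CompleteSpace V]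
    [NormedAddCommGroup H] [InnerProductSpace ℝ H] [CompleteSpace H]
    (γ : V →L[ℝ] H) (hγ : IsCompactOperator γ)
    (S : H →L[ℝ] V)
    (hS : ∀ (f : H) (v : V), ⟪S f, v⟫ = ⟪f, γ v⟫)
    (lam : ℕ → ℝ) (ui : ℕ → V)
    (hui : ∀ i, ui i ≠ 0)
    (heig : ∀ i, ∀ v : V, ⟪ui i, v⟫ = lam i * ⟪γ (ui i), γ v⟫)
    (hortho : ∀ i j, ⟪γ (ui i), γ (ui j)⟫ = if i = j then (1 : ℝ) else 0)
    (hdecomp : ∀ u : V, ∃ m ∈ (Submodule.span ℝ (Set.range ui)).topologicalClosure,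
      ∃ k : V, S (γ k) = 0 ∧ u = m + k)
    (hmin : ∀ i, lam 0 ≤ lam i)
    (ustar : V) (lamstar : ℝ) (hustar : γ ustar ≠ 0)
    (w : V)
    (hw : ∀ v : V, ⟪w, v⟫ = ⟪ustar, v⟫ - lamstar * ⟪γ ustar, γ v⟫)
    (hclosest : ∀ i, |(lam 0 - lamstar) / lam 0| ≤ |(lam i - lamstar) / lam i|)
    (Cγ : ℝ) (hCγ : Cγ = (Real.sqrt (lam 0))⁻¹)
    (hCopt : ∀ v : V, ‖γ v‖ ≤ Cγ * ‖v‖)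
    (A B : ℝ) (hA : 0 ≤ A) (hB : 0 ≤ B)
    (hBsmall : B < lamstar * ‖γ ustar‖)
    (hwbound : ‖w‖ ≤ A + Cγ * B) :
    ((-(A / ‖γ ustar‖) +
        Real.sqrt ((A / ‖γ ustar‖) ^ 2 + 4 * (lamstar - B / ‖γ ustar‖))) / 2) ^ 2
      ≤ lam 0 ∧
    Cγ ≤ 1 / ((-(A / ‖γ ustar‖) +
        Real.sqrt ((A / ‖γ ustar‖) ^ 2 + 4 * (lamstar - B / ‖γ ustar‖))) / 2) := by
  have hgpos : (0:ℝ) < ‖γ ustar‖ := norm_pos_iff.mpr hustar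
  -- positivity of eigenvalues
  have hlam : ∀ i, 0 < lam i := by
    intro i
    have h1 := heig i (ui i)
    rw [hortho i i, if_pos rfl, mul_one, real_inner_self_eq_norm_sq] at h1
    rw [← h1]
    have : ‖ui i‖ ≠ 0 := norm_ne_zero_iff.mpr (hui i)
    positivity
  -- orthonormal family
  have hf : Orthonormal ℝ (fun i => γ (ui i)) := orthonormal_iff_ite.mpr hortho
  -- S (γ (ui i)) = (lam i)⁻¹ • ui i
  have hSf : ∀ i, S (γ (ui i)) = (lam i)⁻¹ • ui i := by
    intro i
    refine ext_inner_right ℝ (fun v => ?_)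
    rw [hS, real_inner_smul_left, heig i v, inv_mul_cancel_left₀ (hlam i).ne']
  -- residual coefficients
  have hrc : ∀ i, ⟪γ (ui i), γ w⟫ = (lam i - lamstar) / lam i * ⟪γ (ui i), γ ustar⟫ := by
    intro i
    have e0 : ⟪γ (ui i), γ w⟫ = ⟪w, S (γ (ui i))⟫ := by
      rw [← hS]; exact real_inner_comm _ _
    rw [e0, hw, hSf i, real_inner_smul_right, map_smul, real_inner_smul_right,
      real_inner_comm (ui i) ustar, heig i ustar, real_inner_comm (γ ustar) (γ (ui i))]
    field_simp
  -- γ ustar lies in the closed span of the γ (ui i)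
  obtain ⟨m, hm, k, hk0, huk⟩ := hdecomp ustar
  have hγk : γ k = 0 := by
    have h := hS (γ k) k
    rw [hk0] at h
    simp only [inner_zero_left] at h
    exact inner_self_eq_zero.mp h.symm
  have hgm : γ ustar = γ m := by rw [huk, map_add, hγk, add_zero]
  have hgK : γ ustar ∈ (Submodule.span ℝ
      (Set.range (fun i => γ (ui i)))).topologicalClosure := by
    rw [hgm]
    have hmc : m ∈ closure ((Submodule.span ℝ (Set.range ui)) : Set V) := hm
    refine map_mem_closure γ.continuous hmc ?_
    intro x hx
    have hx2 : γ x ∈ Submodule.map (γ : V →ₗ[ℝ] H) (Submodule.span ℝ (Set.range ui)) :=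
      ⟨x, hx, rfl⟩
    rw [Submodule.map_span] at hx2
    refine SetLike.mem_coe.mpr (Submodule.span_mono ?_ hx2)
    rintro y ⟨x', ⟨i, rfl⟩, rfl⟩
    exact ⟨i, rfl⟩
  -- Parseval for γ ustar
  set K := (Submodule.span ℝ (Set.range (fun i => γ (ui i)))).topologicalClosure with hKdef
  haveI : CompleteSpace K :=
    (Submodule.span ℝ (Set.range (fun i => γ (ui i)))).isClosed_topologicalClosure.completeSpace_coe
  let v : ℕ → K := fun i => ⟨γ (ui i),
    Submodule.le_topologicalClosure _ (Submodule.subset_span ⟨i, rfl⟩)⟩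
  have hv : Orthonormal ℝ v := by
    rw [orthonormal_iff_ite]
    intro i j
    have h : ⟪v i, v j⟫ = ⟪γ (ui i), γ (ui j)⟫ := rfl
    rw [h, hortho]
  have hspan : ⊤ ≤ (Submodule.span ℝ (Set.range v)).topologicalClosure := by
    rintro ⟨x, hx⟩ -
    have himg : (Subtype.val '' ((Submodule.span ℝ (Set.range v)) : Set K))
        = ((Submodule.span ℝ (Set.range (fun i => γ (ui i)))) : Set H) := by
      have h1 : Subtype.val '' ((Submodule.span ℝ (Set.range v)) : Set K)
          = (Submodule.map K.subtype (Submodule.span ℝ (Set.range v)) : Set H) := rfl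
      rw [h1, Submodule.map_span]
      congr 1
      rw [← Set.range_comp]
      rfl
    have : (⟨x, hx⟩ : K) ∈ closure ((Submodule.span ℝ (Set.range v)) : Set K) := by
      rw [closure_subtype, himg]
      exact hx
    exact this
  set b := HilbertBasis.mk hv hspan with hbdef
  set gK : K := ⟨γ ustar, hgK⟩ with hgKdef
  have hparse : ∑' i, ⟪γ (ui i), γ ustar⟫ ^ 2 = ‖γ ustar‖ ^ 2 := by
    have h := b.tsum_inner_mul_inner gK gK
    have hb : ∀ i, (b i : H) = γ (ui i) := by
      intro i
      rw [hbdef, HilbertBasis.coe_mk]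
    have h2 : ∀ i, ⟪gK, b i⟫ * ⟪b i, gK⟫ = ⟪γ (ui i), γ ustar⟫ ^ 2 := by
      intro i
      have e1 : ⟪gK, b i⟫ = ⟪(gK : H), (b i : H)⟫ := rfl
      have e2 : ⟪b i, gK⟫ = ⟪(b i : H), (gK : H)⟫ := rfl
      rw [e1, e2, hb i, hgKdef, real_inner_comm (γ ustar) (γ (ui i))]
      ring
    rw [tsum_congr h2] at h
    rw [h]
    have e3 : ⟪gK, gK⟫ = ⟪γ ustar, γ ustar⟫ := rfl
    rw [e3, real_inner_self_eq_norm_sq]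
  -- summability facts
  have hsum_g : Summable (fun i => ⟪γ (ui i), γ ustar⟫ ^ 2) := by
    have := hf.inner_products_summable (x := γ ustar)
    simpa [sq_abs] using this
  have hsum_r : Summable (fun i => ((lam i - lamstar) / lam i) ^ 2
      * ⟪γ (ui i), γ ustar⟫ ^ 2) := by
    have := hf.inner_products_summable (x := γ w)
    simp only [Real.norm_eq_abs, sq_abs] at this
    apply this.congr
    intro i
    rw [hrc i]
    ring
  -- Bessel for γ w
  have hbessel : ∑' i, ((lam i - lamstar) / lam i) ^ 2 * ⟪γ (ui i), γ ustar⟫ ^ 2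
      ≤ ‖γ w‖ ^ 2 := by
    have h := hf.tsum_inner_products_le (γ w)
    simp only [Real.norm_eq_abs, sq_abs] at h
    calc ∑' i, ((lam i - lamstar) / lam i) ^ 2 * ⟪γ (ui i), γ ustar⟫ ^ 2
        = ∑' i, ⟪γ (ui i), γ w⟫ ^ 2 := by
          refine tsum_congr (fun i => ?_)
          rw [hrc i]; ring
      _ ≤ ‖γ w‖ ^ 2 := h
  -- key lower bound
  set c0 : ℝ := |(lam 0 - lamstar) / lam 0| with hc0
  have hkey2 : c0 ^ 2 * ‖γ ustar‖ ^ 2 ≤ ‖γ w‖ ^ 2 := by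
    rw [← hparse, ← tsum_mul_left]
    refine le_trans (Summable.tsum_le_tsum (fun i => ?_) (hsum_g.mul_left _) hsum_r) hbessel
    have h1 : c0 ^ 2 ≤ ((lam i - lamstar) / lam i) ^ 2 := by
      rw [← sq_abs ((lam i - lamstar) / lam i)]
      exact pow_le_pow_left₀ (abs_nonneg _) (hclosest i) 2
    exact mul_le_mul_of_nonneg_right h1 (sq_nonneg _)
  have hkey : c0 * ‖γ ustar‖ ≤ ‖γ w‖ := by
    nlinarith [abs_nonneg ((lam 0 - lamstar) / lam 0), hgpos, norm_nonneg (γ w)]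
  -- chain with the residual bound
  set s : ℝ := Real.sqrt (lam 0) with hs
  have hspos : 0 < s := Real.sqrt_pos.mpr (hlam 0)
  have hs2 : s ^ 2 = lam 0 := Real.sq_sqrt (hlam 0).le
  have hCpos : 0 < Cγ := by rw [hCγ]; exact inv_pos.mpr hspos
  have hchain : c0 * ‖γ ustar‖ ≤ s⁻¹ * (A + s⁻¹ * B) := by
    calc c0 * ‖γ ustar‖ ≤ ‖γ w‖ := hkey
      _ ≤ Cγ * ‖w‖ := hCopt w
      _ ≤ Cγ * (A + Cγ * B) := mul_le_mul_of_nonneg_left hwbound hCpos.le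
      _ = s⁻¹ * (A + s⁻¹ * B) := by rw [hCγ]
  have habs : (lamstar - lam 0) / lam 0 ≤ c0 := by
    rw [hc0, abs_div, abs_of_pos (hlam 0)]
    have : lamstar - lam 0 ≤ |lam 0 - lamstar| := by
      have := neg_le_abs (lam 0 - lamstar)
      linarith
    exact div_le_div_of_nonneg_right this (hlam 0).le
  -- clear denominators
  have h4 : (lamstar - lam 0) * ‖γ ustar‖ ≤ s * A + B := by
    have h5 : (lamstar - lam 0) / lam 0 * ‖γ ustar‖ ≤ s⁻¹ * (A + s⁻¹ * B) :=
      le_trans (mul_le_mul_of_nonneg_right habs hgpos.le) hchain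
    have h6 := mul_le_mul_of_nonneg_left h5 (hlam 0).le
    have e1 : lam 0 * ((lamstar - lam 0) / lam 0 * ‖γ ustar‖)
        = (lamstar - lam 0) * ‖γ ustar‖ := by
      field_simp [(hlam 0).ne']
    have e2 : lam 0 * (s⁻¹ * (A + s⁻¹ * B)) = s * A + B := by
      rw [← hs2]
      field_simp
    rw [e1, e2] at h6
    exact h6
  -- final algebra
  have hαnn : 0 ≤ A / ‖γ ustar‖ := div_nonneg hA hgpos.le
  have hβlt : B / ‖γ ustar‖ < lamstar := (div_lt_iff₀ hgpos).mpr hBsmall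
  have hstar : lamstar - s ^ 2 ≤ s * (A / ‖γ ustar‖) + B / ‖γ ustar‖ := by
    have h7 : lamstar - s ^ 2 ≤ (s * A + B) / ‖γ ustar‖ := by
      rw [le_div_iff₀ hgpos, hs2]
      exact h4
    calc lamstar - s ^ 2 ≤ (s * A + B) / ‖γ ustar‖ := h7
      _ = s * (A / ‖γ ustar‖) + B / ‖γ ustar‖ := by ring
  have hDgt : (A / ‖γ ustar‖) ^ 2
      < (A / ‖γ ustar‖) ^ 2 + 4 * (lamstar - B / ‖γ ustar‖) := by linarith
  have hsqrtD_le :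
      Real.sqrt ((A / ‖γ ustar‖) ^ 2 + 4 * (lamstar - B / ‖γ ustar‖)) ≤ 2 * s + A / ‖γ ustar‖ := by
    have hle : (A / ‖γ ustar‖) ^ 2 + 4 * (lamstar - B / ‖γ ustar‖)
        ≤ (2 * s + A / ‖γ ustar‖) ^ 2 := by nlinarith [hstar]
    calc Real.sqrt ((A / ‖γ ustar‖) ^ 2 + 4 * (lamstar - B / ‖γ ustar‖))
        ≤ Real.sqrt ((2 * s + A / ‖γ ustar‖) ^ 2) := Real.sqrt_le_sqrt hle
      _ = 2 * s + A / ‖γ ustar‖ := Real.sqrt_sq (by positivity)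
  have hX2pos : 0 < (-(A / ‖γ ustar‖) +
      Real.sqrt ((A / ‖γ ustar‖) ^ 2 + 4 * (lamstar - B / ‖γ ustar‖))) / 2 := by
    have h8 : A / ‖γ ustar‖
        < Real.sqrt ((A / ‖γ ustar‖) ^ 2 + 4 * (lamstar - B / ‖γ ustar‖)) := by
      calc A / ‖γ ustar‖ = Real.sqrt ((A / ‖γ ustar‖) ^ 2) := (Real.sqrt_sq hαnn).symm
        _ < _ := Real.sqrt_lt_sqrt (sq_nonneg _) hDgt
    linarith
  have hX2le : (-(A / ‖γ ustar‖) +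
      Real.sqrt ((A / ‖γ ustar‖) ^ 2 + 4 * (lamstar - B / ‖γ ustar‖))) / 2 ≤ s := by
    linarith
  constructor
  · calc ((-(A / ‖γ ustar‖) +
        Real.sqrt ((A / ‖γ ustar‖) ^ 2 + 4 * (lamstar - B / ‖γ ustar‖))) / 2) ^ 2
        ≤ s ^ 2 := pow_le_pow_left₀ hX2pos.le hX2le 2
      _ = lam 0 := hs2
  · rw [hCγ, one_div]
    exact inv_anti₀ hX2pos hX2le
end

section
/- If λ₁^low ≤ λ₁ ≤ λ_* ≤ λ₂^low ≤ λ₂ ≤ λ₂^up and D₁ = (λ_* − λ₁^low)/λ₁^low ≤ D₂ = (λ₂^low − λ_*)/λ₂^up, then |(λ₁ − λ_*)/λ₁| ≤ |(λ_i − λ_*)/λ_i| for all i ≥ 1, where λ₁ ≤ λ₂ ≤ λ₃ ≤ ⋯ are positive reals. -/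
/-- If `λ₁^low ≤ λ₁ ≤ λ_* ≤ λ₂^low ≤ λ₂ ≤ λ₂^up` and
`D₁ = (λ_* − λ₁^low)/λ₁^low ≤ D₂ = (λ₂^low − λ_*)/λ₂^up`, then
`|(λ₁ − λ_*)/λ₁| ≤ |(λᵢ − λ_*)/λᵢ|` for all `i`, where `λ₁ ≤ λ₂ ≤ λ₃ ≤ ⋯`
is a nondecreasing sequence of positive reals (`λ₁ = lam 0`, `λ₂ = lam 1`). -/
theorem relatively_closest_test
    (lam : ℕ → ℝ) (hmono : Monotone lam) (hpos : ∀ i, 0 < lam i)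
    (lam1low lam2low lam2up lamstar : ℝ)
    (h1lowpos : 0 < lam1low) (h2lowpos : 0 < lam2low) (h2uppos : 0 < lam2up)
    (hstarpos : 0 < lamstar)
    (h1 : lam1low ≤ lam 0) (h2 : lam 0 ≤ lamstar) (h3 : lamstar ≤ lam2low)
    (h4 : lam2low ≤ lam 1) (h5 : lam 1 ≤ lam2up)
    (hD : (lamstar - lam1low) / lam1low ≤ (lam2low - lamstar) / lam2up) :
    ∀ i : ℕ, |(lam 0 - lamstar) / lam 0| ≤ |(lam i - lamstar) / lam i| := by
  intro i
  rcases Nat.eq_zero_or_pos i with rfl | hi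
  · exact le_refl _
  · have h1i : lam 1 ≤ lam i := hmono hi
    have hp0 := hpos 0
    have hp1 := hpos 1
    have hpi := hpos i
    have hA : (lamstar - lam 0) / lam 0 ≤ (lamstar - lam1low) / lam1low := by
      rw [div_le_div_iff₀ hp0 h1lowpos]; nlinarith
    have hB : (lam2low - lamstar) / lam2up ≤ (lam 1 - lamstar) / lam 1 := by
      rw [div_le_div_iff₀ h2uppos hp1]; nlinarith
    have hC : (lam 1 - lamstar) / lam 1 ≤ (lam i - lamstar) / lam i := by
      rw [div_le_div_iff₀ hp1 hpi]; nlinarith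
    have hchain := ((hA.trans hD).trans hB).trans hC
    rw [abs_div, abs_div, abs_of_pos hp0, abs_of_pos hpi,
        abs_of_nonpos (by linarith : lam 0 - lamstar ≤ 0),
        abs_of_nonneg (by linarith : 0 ≤ lam i - lamstar)]
    simpa using hchain
end
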